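/- For all n ≥ 2, the designs X_n generated by the greedy-packing algorithm satisfy CR(X_n) ≤ 2·CR*_n, where CR*_n = min over all n-point designs in X of their fill distance. -/

import Mathlib

open Metric Set MeasureTheory

/-- Distance from a point `x` to the nearest point of the design `D`. -/
noncomputable def minDist {E : Type*} [NormedAddCommGroup E] (D : Finset E) (x : E) : ℝ :=
  sInf ((fun p => dist x p) '' (D : Set E))

/-- Fill distance (covering radius) of the design `D` for the set `A`:
`CR_A(D) = sup_{x ∈ A} min_{p ∈ D} ‖x - p‖`. -/
noncomputable def fillDist {E : Type*} [NormedAddCommGroup E] (A : Set E) (D : Finset E) : ℝ :=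
  sSup ((fun x => minDist D x) '' A)

/-- Separation radius of the design `D`:
`SR(D) = (1/2) min_{p ≠ q ∈ D} ‖p - q‖`. -/
noncomputable def sepRad {E : Type*} [NormedAddCommGroup E] (D : Finset E) : ℝ :=
  (1 / 2) * sInf ((fun p : E × E => dist p.1 p.2) '' {p | p.1 ∈ D ∧ p.2 ∈ D ∧ p.1 ≠ p.2})

/-- Mesh-ratio of the design `D` for the set `A`: `MR(D) = CR_A(D) / SR(D)`. -/
noncomputable def meshRatio {E : Type*} [NormedAddCommGroup E] (A : Set E) (D : Finset E) : ℝ :=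
  fillDist A D / sepRad D

/-- The nested design consisting of the first `n` points of the sequence `x`. -/
noncomputable def design {E : Type*} (x : ℕ → E) (n : ℕ) : Finset E :=
  letI := Classical.decEq E
  (Finset.range n).image x

section Helpers
variable {E : Type*} [NormedAddCommGroup E]

lemma minDist_nonneg (D : Finset E) (x : E) : 0 ≤ minDist D x := by
  apply Real.sInf_nonneg
  rintro r ⟨p, hp, rfl⟩; exact dist_nonneg

lemma bddBelow_dists (D : Finset E) (x : E) :
    BddBelow ((fun p => dist x p) '' (D : Set E)) :=
  ⟨0, by rintro r ⟨q, hq, rfl⟩; exact dist_nonneg⟩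

lemma minDist_le {D : Finset E} {p : E} (hp : p ∈ D) (x : E) : minDist D x ≤ dist x p :=
  csInf_le (bddBelow_dists D x) ⟨p, hp, rfl⟩

lemma exists_minDist {D : Finset E} (hD : D.Nonempty) (x : E) :
    ∃ p ∈ D, minDist D x = dist x p := by
  have hfin : ((fun p => dist x p) '' (D : Set E)).Finite :=
    (D.finite_toSet).image _
  have hne : ((fun p => dist x p) '' (D : Set E)).Nonempty :=
    ⟨dist x hD.choose, hD.choose, hD.choose_spec, rfl⟩
  obtain ⟨p, hp, hpe⟩ := hne.csInf_mem hfin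
  exact ⟨p, hp, hpe.symm⟩

lemma minDist_anti {D D' : Finset E} (h : D ⊆ D') (hD : D.Nonempty) (x : E) :
    minDist D' x ≤ minDist D x := by
  exact csInf_le_csInf (bddBelow_dists D' x)
    ⟨dist x hD.choose, hD.choose, hD.choose_spec, rfl⟩
    (Set.image_mono (by exact_mod_cast h))

lemma bddAbove_fill {S : Set E} (hS : Bornology.IsBounded S) {D : Finset E} (hD : D.Nonempty) :
    BddAbove ((fun y => minDist D y) '' S) := by
  obtain ⟨p, hp⟩ := hD
  obtain ⟨r, hr⟩ := hS.subset_closedBall p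
  refine ⟨r, ?_⟩
  rintro v ⟨y, hy, rfl⟩
  exact (minDist_le hp y).trans (hr hy)

lemma le_fillDist {S : Set E} (hS : Bornology.IsBounded S) {D : Finset E} (hD : D.Nonempty)
    {y : E} (hy : y ∈ S) : minDist D y ≤ fillDist S D :=
  le_csSup (bddAbove_fill hS hD) ⟨y, hy, rfl⟩

lemma fillDist_nonneg {S : Set E} (hS : Bornology.IsBounded S) {D : Finset E} (hD : D.Nonempty)
    {y : E} (hy : y ∈ S) : 0 ≤ fillDist S D :=
  (minDist_nonneg D y).trans (le_fillDist hS hD hy)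

lemma fillDist_anti {S : Set E} (hS : Bornology.IsBounded S) {D D' : Finset E} (h : D ⊆ D')
    (hD : D.Nonempty) {y : E} (hy : y ∈ S) : fillDist S D' ≤ fillDist S D := by
  apply Real.sSup_le _ (fillDist_nonneg hS hD hy)
  rintro v ⟨z, hz, rfl⟩
  exact (minDist_anti h hD z).trans (le_fillDist hS hD hz)

end Helpers

/-- For all `n ≥ 2`, the designs `Xₙ` generated by the greedy-packing
algorithm satisfy `CR(Xₙ) ≤ 2·CR*ₙ`, where `CR*ₙ` is the minimal fill distance over all
`n`-point designs in `S` (expressed as: `CR(Xₙ) ≤ 2·CR(D')` for every `n`-point design `D'`). -/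
theorem statement6 {d : ℕ} (hd : 1 ≤ d)
    {E : Type*} [NormedAddCommGroup E] [NormedSpace ℝ E] [FiniteDimensional ℝ E]
    (hdim : Module.finrank ℝ E = d)
    (S : Set E) (hS : IsCompact S)
    (x : ℕ → E) (hinj : Function.Injective x) (hx0 : x 0 ∈ S)
    (hgreedy : ∀ k : ℕ, 1 ≤ k →
      x k ∈ S ∧ minDist (design x k) (x k) = fillDist S (design x k))
    (n : ℕ) (hn : 2 ≤ n) :
    ∀ D' : Finset E, ↑D' ⊆ S → D'.card = n → fillDist S (design x n) ≤ 2 * fillDist S D' := by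
  intro D' hD'S hD'card
  have hbd : Bornology.IsBounded S := hS.isBounded
  have hxS : ∀ i : ℕ, x i ∈ S := by
    intro i
    cases i with
    | zero => exact hx0
    | succ k => exact (hgreedy _ (Nat.succ_le_succ (Nat.zero_le k))).1
  have hD'ne : D'.Nonempty := Finset.card_pos.mp (by omega)
  have key : ∀ i : Fin (n+1), ∃ p ∈ D', dist (x i.1) p ≤ fillDist S D' := by
    intro i
    obtain ⟨p, hp, hpe⟩ := exists_minDist hD'ne (x i.1)
    exact ⟨p, hp, hpe ▸ le_fillDist hbd hD'ne (hxS i.1)⟩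
  choose f hf hfd using key
  have hcard : D'.card < (Finset.univ : Finset (Fin (n+1))).card := by
    simp [hD'card]
  obtain ⟨i, -, j, -, hij, hfij⟩ :=
    Finset.exists_ne_map_eq_of_card_lt_of_maps_to hcard (fun a _ => hf a)
  have main : ∀ i j : Fin (n+1), i.1 < j.1 → f i = f j →
      fillDist S (design x n) ≤ 2 * fillDist S D' := by
    intro i j hlt hfe
    have hj1 : 1 ≤ j.1 := by omega
    have hdesne : (design x j.1).Nonempty := by
      refine ⟨x 0, ?_⟩
      simp only [design, Finset.mem_image, Finset.mem_range]
      exact ⟨0, by omega, rfl⟩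
    have hsub : design x j.1 ⊆ design x n := by
      intro a ha
      simp only [design, Finset.mem_image, Finset.mem_range] at ha ⊢
      obtain ⟨k, hk, rfl⟩ := ha
      exact ⟨k, by omega, rfl⟩
    have h1 : fillDist S (design x n) ≤ fillDist S (design x j.1) :=
      fillDist_anti hbd hsub hdesne hx0
    have hxi_mem : x i.1 ∈ design x j.1 := by
      simp only [design, Finset.mem_image, Finset.mem_range]
      exact ⟨i.1, hlt, rfl⟩
    have h2 : fillDist S (design x j.1) = minDist (design x j.1) (x j.1) :=
      ((hgreedy j.1 hj1).2).symm
    have h3 : minDist (design x j.1) (x j.1) ≤ dist (x j.1) (x i.1) := minDist_le hxi_mem _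
    have hfi : dist (f j) (x i.1) ≤ fillDist S D' := by
      rw [← hfe, dist_comm]; exact hfd i
    calc fillDist S (design x n) ≤ dist (x j.1) (x i.1) := by rw [h2] at h1; exact h1.trans h3
      _ ≤ dist (x j.1) (f j) + dist (f j) (x i.1) := dist_triangle _ _ _
      _ ≤ fillDist S D' + fillDist S D' := add_le_add (hfd j) hfi
      _ = 2 * fillDist S D' := by ring
  have hne : i.1 ≠ j.1 := fun h => hij (Fin.ext h)
  rcases Nat.lt_or_ge i.1 j.1 with h | h
  · exact main i j h hfij
  · exact main j i (by omega) hfij.symm
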